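/- With the same definitions, for all n ≥ 1 and 0 < y ≤ n, f(y) - f_n(y) < y/(2n), where f(y) = (1 + αy/(α+1))^{-1/α}. -/

import Mathlib

open Real


/-- Core tangent inequality: `1 - c (t-1) ≤ t^(-c)` for `t > 0`, `c ≥ 0`. -/
lemma my_core_ineq (c t : ℝ) (hc : 0 ≤ c) (ht : 0 < t) : 1 - c * (t - 1) ≤ t ^ (-c) := by
  rw [Real.rpow_def_of_pos ht]
  have h1 : Real.log t ≤ t - 1 := Real.log_le_sub_one_of_pos ht
  have h2 : Real.log t * (-c) + 1 ≤ Real.exp (Real.log t * (-c)) := Real.add_one_le_exp _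
  nlinarith [mul_nonneg hc (by linarith : (0:ℝ) ≤ t - 1 - Real.log t)]

/-- Tangent-line inequality for the convex function `x ↦ x^(-c)`. -/
lemma my_tangent (c x y : ℝ) (hc : 0 ≤ c) (hx : 0 < x) (hy : 0 < y) :
    x ^ (-c) - c * x ^ (-c - 1) * (y - x) ≤ y ^ (-c) := by
  have ht : 0 < y / x := div_pos hy hx
  have key : 1 - c * (y / x - 1) ≤ (y / x) ^ (-c) := my_core_ineq c (y / x) hc ht
  have hxy : y ^ (-c) = x ^ (-c) * (y / x) ^ (-c) := by
    rw [← Real.mul_rpow hx.le (div_nonneg hy.le hx.le)]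
    congr 1
    field_simp
  have hx1 : x ^ (-c - 1) = x ^ (-c) * x⁻¹ := by
    rw [← Real.rpow_neg_one x, ← Real.rpow_add hx]
    congr 1
  have hxc : (0 : ℝ) < x ^ (-c) := Real.rpow_pos_of_pos hx _
  have h2 : x ^ (-c) * (1 - c * (y / x - 1)) ≤ x ^ (-c) * (y / x) ^ (-c) :=
    mul_le_mul_of_nonneg_left key hxc.le
  calc x ^ (-c) - c * x ^ (-c - 1) * (y - x)
      = x ^ (-c) * (1 - c * (y / x - 1)) := by rw [hx1]; field_simp
    _ ≤ x ^ (-c) * (y / x) ^ (-c) := h2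
    _ = y ^ (-c) := hxy.symm

/-- Bernoulli for exponent `p ≥ 1` (positive base). -/
lemma my_bernoulli (p t : ℝ) (hp : 1 ≤ p) (ht : 0 < t) : 1 + p * (t - 1) ≤ t ^ p := by
  have hc : 0 ≤ p - 1 := by linarith
  have hti : 0 < t⁻¹ := inv_pos.mpr ht
  have h1 : 1 - (p - 1) * (t⁻¹ - 1) ≤ (t⁻¹) ^ (-(p - 1)) := my_core_ineq (p - 1) t⁻¹ hc hti
  have h2 : (t⁻¹ : ℝ) ^ (-(p - 1)) = t ^ (p - 1) := by
    rw [← Real.rpow_neg_one t, ← Real.rpow_mul ht.le]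
    ring_nf
  rw [h2] at h1
  have h3 : t ^ p = t * t ^ (p - 1) := by
    nth_rewrite 2 [← Real.rpow_one t]
    rw [← Real.rpow_add ht]
    ring_nf
  rw [h3]
  have h4 : t * (1 - (p - 1) * (t⁻¹ - 1)) ≤ t * t ^ (p - 1) := mul_le_mul_of_nonneg_left h1 ht.le
  have h5 : t * (1 - (p - 1) * (t⁻¹ - 1)) = 1 + p * (t - 1) + (p-1) * 0 := by
    field_simp
    ring
  nlinarith [h4, h5]

/-- Midpoint inequality for `x ↦ x^(-q)`:  `(1-u)^(-q) - (1+u)^(-q) ≥ 2qu`. -/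
lemma my_midpoint (q : ℝ) (hq : 0 < q) (u : ℝ) (hu0 : 0 ≤ u) (hu1 : u < 1) :
    2 * q * u ≤ (1 - u) ^ (-q) - (1 + u) ^ (-q) := by
  set g : ℝ → ℝ := fun x => (1 - x) ^ (-q) - (1 + x) ^ (-q) - 2 * q * x with hg
  have hderiv : ∀ x ∈ Set.Ioo (0:ℝ) 1,
      HasDerivAt g (q * (1 - x) ^ (-q - 1) + q * (1 + x) ^ (-q - 1) - 2 * q) x := by
    intro x hx
    have h1x : (0:ℝ) < 1 - x := by linarith [hx.2]
    have h1x' : (0:ℝ) < 1 + x := by linarith [hx.1]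
    have d1 : HasDerivAt (fun y : ℝ => 1 - y) (-1) x := by
      simpa using (hasDerivAt_id x).const_sub 1
    have d2 : HasDerivAt (fun y : ℝ => 1 + y) 1 x := by
      simpa using (hasDerivAt_id x).const_add 1
    have r1 : HasDerivAt (fun y : ℝ => (1 - y) ^ (-q)) (-q * (1 - x) ^ (-q - 1) * -1) x := by
      exact (Real.hasDerivAt_rpow_const (Or.inl h1x.ne')).comp x d1
    have r2 : HasDerivAt (fun y : ℝ => (1 + y) ^ (-q)) (-q * (1 + x) ^ (-q - 1) * 1) x := by
      exact (Real.hasDerivAt_rpow_const (Or.inl h1x'.ne')).comp x d2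
    have r3 : HasDerivAt (fun y : ℝ => 2 * q * y) (2 * q) x := by
      simpa using (hasDerivAt_id x).const_mul (2 * q)
    have := (r1.sub r2).sub r3
    refine this.congr_deriv ?_
    ring
  have hcont : ContinuousOn g (Set.Ico (0:ℝ) 1) := by
    apply ContinuousOn.sub
    apply ContinuousOn.sub
    · apply ContinuousOn.rpow_const
      · exact (continuousOn_const.sub continuousOn_id)
      · intro x hx
        exact Or.inl (by simp only [Set.mem_Ico] at hx; intro h; nlinarith [hx.2] : (1:ℝ) - x ≠ 0)
    · apply ContinuousOn.rpow_const
      · exact (continuousOn_const.add continuousOn_id)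
      · intro x hx
        exact Or.inl (by simp only [Set.mem_Ico] at hx; intro h; nlinarith [hx.1] : (1:ℝ) + x ≠ 0)
    · exact (continuousOn_const.mul continuousOn_id)
  have hmono : MonotoneOn g (Set.Ico (0:ℝ) 1) := by
    apply monotoneOn_of_deriv_nonneg (convex_Ico 0 1) hcont
    · intro x hx
      rw [interior_Ico] at hx
      exact (hderiv x hx).differentiableAt.differentiableWithinAt
    · intro x hx
      rw [interior_Ico] at hx
      rw [(hderiv x hx).deriv]
      have h1x : (0:ℝ) < 1 - x := by linarith [hx.2]
      have h1x' : (0:ℝ) < 1 + x := by linarith [hx.1]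
      set a := (1 - x) ^ (-q - 1) with ha
      set b := (1 + x) ^ (-q - 1) with hb
      have hab : 1 ≤ a * b := by
        rw [ha, hb, ← Real.mul_rpow h1x.le h1x'.le]
        apply Real.one_le_rpow_of_pos_of_le_one_of_nonpos
        · nlinarith [hx.1, hx.2]
        · nlinarith [hx.1, hx.2]
        · linarith
      have hapos : 0 < a := Real.rpow_pos_of_pos h1x _
      have hbpos : 0 < b := Real.rpow_pos_of_pos h1x' _
      nlinarith [sq_nonneg (a - b), sq_nonneg (a + b - 2)]
  have h0 : g 0 ≤ g u := by
    apply hmono (Set.mem_Ico.mpr ⟨le_refl 0, one_pos⟩) (Set.mem_Ico.mpr ⟨hu0, hu1⟩) hu0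
  have hg0 : g 0 = 0 := by
    simp [hg, Real.one_rpow]
  rw [hg0] at h0
  simp only [hg] at h0
  linarith
/-- The key step inequality (★):
`F s - F (s+h) ≥ (h/(α+1)) * (F s - h/2)^(α+1)` whenever `F s > h/2`. -/
lemma my_star (α h s : ℝ) (hα : 0 < α) (hh0 : 0 < h) (hh1 : h ≤ 1) (hs : 0 ≤ s)
    (hθ : 0 < (1 + α * s / (α + 1)) ^ (-(1 / α)) - h / 2) :
    (h / (α + 1)) * ((1 + α * s / (α + 1)) ^ (-(1 / α)) - h / 2) ^ (α + 1)
      ≤ (1 + α * s / (α + 1)) ^ (-(1 / α)) - (1 + α * (s + h) / (α + 1)) ^ (-(1 / α)) := by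
  have hα1 : (0:ℝ) < α + 1 := by linarith
  set q : ℝ := 1 / α with hqdef
  have hq : 0 < q := by positivity
  set A : ℝ := 1 + α * s / (α + 1) with hA
  set d : ℝ := α * h / (2 * (α + 1)) with hd
  have hd0 : 0 < d := by positivity
  have hA1 : (1:ℝ) ≤ A := by
    have h1 : 0 ≤ α * s / (α + 1) := div_nonneg (mul_nonneg hα.le hs) hα1.le
    rw [hA]; linarith
  have hA0 : (0:ℝ) < A := by linarith
  set M : ℝ := A + d with hM
  have hM0 : (0:ℝ) < M := by linarith
  have hC : 1 + α * (s + h) / (α + 1) = A + 2 * d := by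
    rw [hA, hd]; field_simp; ring
  set u : ℝ := d / M with hu
  have hu0 : 0 ≤ u := by positivity
  have hu1 : u < 1 := by
    rw [hu, div_lt_one hM0]; linarith
  -- A = M (1-u), A + 2d = M (1+u)
  have hAe : A = M * (1 - u) := by
    rw [hu]; field_simp; rw [hM]; ring
  have hCe : A + 2 * d = M * (1 + u) := by
    rw [hu]; field_simp; ring
  -- midpoint inequality, scaled
  have hmid : 2 * q * u ≤ (1 - u) ^ (-q) - (1 + u) ^ (-q) := my_midpoint q hq u hu0 hu1
  have hMq : (0:ℝ) < M ^ (-q) := Real.rpow_pos_of_pos hM0 _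
  have h1u : (0:ℝ) ≤ 1 - u := by linarith
  have h1u' : (0:ℝ) ≤ 1 + u := by linarith
  have hsplit1 : A ^ (-q) = M ^ (-q) * (1 - u) ^ (-q) := by
    rw [hAe, Real.mul_rpow hM0.le h1u]
  have hsplit2 : (A + 2*d) ^ (-q) = M ^ (-q) * (1 + u) ^ (-q) := by
    rw [hCe, Real.mul_rpow hM0.le h1u']
  have hdrop : M ^ (-q) * (2 * q * u) ≤ A ^ (-q) - (A + 2*d) ^ (-q) := by
    rw [hsplit1, hsplit2, ← mul_sub]
    exact mul_le_mul_of_nonneg_left hmid hMq.le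
  -- M^{-q} * u = d * M^{-q-1}
  have hMpow : M ^ (-q) * u = d * M ^ (-q - 1) := by
    rw [hu]
    rw [show (-q - 1 : ℝ) = -q + -1 by ring, Real.rpow_add hM0, Real.rpow_neg_one]
    field_simp
  have h2qd : 2 * q * d = h / (α + 1) := by
    rw [hqdef, hd]; field_simp
  have hdrop2 : (h / (α + 1)) * M ^ (-q - 1) ≤ A ^ (-q) - (A + 2*d) ^ (-q) := by
    calc (h / (α + 1)) * M ^ (-q - 1) = M ^ (-q) * (2 * q * u) := by
          rw [show M ^ (-q) * (2 * q * u) = (2 * q) * (M ^ (-q) * u) by ring, hMpow, ← h2qd]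
          ring
      _ ≤ A ^ (-q) - (A + 2*d) ^ (-q) := hdrop
  -- θ ≤ M^{-q}
  have hAq1 : A ^ (-q - 1) ≤ 1 :=
    Real.rpow_le_one_of_one_le_of_nonpos hA1 (by linarith)
  have hAq1' : 0 < A ^ (-q - 1) := Real.rpow_pos_of_pos hA0 _
  have htan : A ^ (-q) - q * A ^ (-q - 1) * (M - A) ≤ M ^ (-q) := my_tangent q A M hq.le hA0 hM0
  have hqd : q * d ≤ h / 2 := by
    have he : q * d = h / (2 * (α + 1)) := by rw [hqdef, hd]; field_simp
    rw [he, div_le_div_iff₀ (by positivity) two_pos]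
    nlinarith
  have hθM : A ^ (-q) - h / 2 ≤ M ^ (-q) := by
    have hMA : M - A = d := by rw [hM]; ring
    rw [hMA] at htan
    have h1 : q * A ^ (-q - 1) * d ≤ h / 2 := by
      calc q * A ^ (-q - 1) * d ≤ q * 1 * d := by
            apply mul_le_mul_of_nonneg_right _ hd0.le
            exact mul_le_mul_of_nonneg_left hAq1 hq.le
        _ = q * d := by ring
        _ ≤ h / 2 := hqd
    linarith
  -- θ^{α+1} ≤ M^{-(q+1)} = M^{-q-1}
  have hθA : (0:ℝ) < A ^ (-q) - h/2 := by
    have : A ^ (-(1/α)) = A ^ (-q) := by rw [hqdef]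
    rw [← this]; exact hθ
  have hpow : (A ^ (-q) - h/2) ^ (α + 1) ≤ M ^ (-q - 1) := by
    have h1 : (A ^ (-q) - h/2) ^ (α + 1) ≤ (M ^ (-q)) ^ (α + 1) :=
      Real.rpow_le_rpow hθA.le hθM (by linarith)
    have h2 : (M ^ (-q)) ^ (α + 1) = M ^ (-q - 1) := by
      rw [← Real.rpow_mul hM0.le]
      congr 1
      rw [hqdef]
      field_simp
      ring
    rw [← h2]; exact h1
  -- assemble
  have hfinal : (h / (α + 1)) * (A ^ (-q) - h/2) ^ (α + 1) ≤ A ^ (-q) - (A + 2*d) ^ (-q) := by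
    calc (h / (α + 1)) * (A ^ (-q) - h/2) ^ (α + 1) ≤ (h / (α + 1)) * M ^ (-q - 1) := by
          apply mul_le_mul_of_nonneg_left hpow (by positivity)
      _ ≤ A ^ (-q) - (A + 2*d) ^ (-q) := hdrop2
  rw [show (-(1/α) : ℝ) = -q by rw [hqdef], hC]
  exact hfinal
/-- Base case: `F y < 1 - y/(α+1) + y/2` for `0 < y ≤ 1`. -/
lemma my_base (α y : ℝ) (hα : 0 < α) (hy0 : 0 < y) (hy1 : y ≤ 1) :
    (1 + α * y / (α + 1)) ^ (-(1 / α)) < 1 - y / (α + 1) + y / 2 := by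
  have hα1 : (0:ℝ) < α + 1 := by linarith
  set q : ℝ := 1 / α with hqdef
  have hq : 0 < q := by positivity
  set B : ℝ := 1 + α * y / (α + 1) with hB
  have hBgt : 1 < B := by
    have : 0 < α * y / (α + 1) := by positivity
    rw [hB]; linarith
  have hB0 : (0:ℝ) < B := by linarith
  have hq1B : q * (B - 1) = y / (α + 1) := by
    rw [hqdef, hB]; field_simp; ring
  rcases le_or_gt 1 α with hcase | hcase
  · -- α ≥ 1
    have htan := my_tangent q B 1 hq.le hB0 one_pos
    rw [Real.one_rpow] at htan
    -- B^{-q} ≤ 1 - q (B-1) B^{-q-1} = 1 - (y/(α+1)) B^{-q-1}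
    have hBq1 : 0 < B ^ (-q - 1) := Real.rpow_pos_of_pos hB0 _
    have hBq1' : B ^ (-q - 1) ≤ 1 :=
      Real.rpow_le_one_of_one_le_of_nonpos hBgt.le (by linarith)
    have h1 : B ^ (-q) ≤ 1 - (y / (α+1)) * B ^ (-q - 1) := by
      have hX : q * B ^ (-q - 1) * (1 - B) = -(y / (α+1) * B ^ (-q - 1)) := by
        rw [show q * B ^ (-q - 1) * (1 - B) = -(q * (B-1)) * B ^ (-q - 1) by ring, hq1B]
        ring
      rw [hX] at htan
      linarith
    have h2 : (y / (α+1)) * (1 - B ^ (-q - 1)) < y / 2 := by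
      have hy2 : y / (α+1) ≤ y / 2 := by
        rw [div_le_div_iff₀ hα1 two_pos]; nlinarith
      have hlt1 : (1 : ℝ) - B ^ (-q-1) < 1 := by linarith
      calc (y / (α+1)) * (1 - B ^ (-q - 1)) < (y / (α+1)) * 1 := by
            apply mul_lt_mul_of_pos_left hlt1 (by positivity)
        _ = y / (α+1) := by ring
        _ ≤ y / 2 := hy2
    rw [show (-(1/α) : ℝ) = -q by rw [hqdef]]
    nlinarith [h1, h2]
  · -- α < 1, so q > 1
    have hq1 : 1 < q := by
      rw [hqdef]; rw [lt_div_iff₀ hα]; linarith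
    have hbern := my_bernoulli q B hq1.le hB0
    rw [hq1B] at hbern
    -- B^q ≥ 1 + y/(α+1) > 0
    set c : ℝ := y / (α + 1) with hc
    have hc0 : 0 < c := by positivity
    have hc1 : c ≤ 1 := by
      rw [hc, div_le_one hα1]; linarith
    have hBq0 : 0 < B ^ q := Real.rpow_pos_of_pos hB0 _
    have hinv : B ^ (-q) ≤ (1 + c)⁻¹ := by
      rw [Real.rpow_neg hB0.le]
      apply inv_anti₀ (by linarith) hbern
    have hkey : (1 + c)⁻¹ < 1 - c + y / 2 := by
      rw [inv_lt_iff_one_lt_mul₀ (by linarith : (0:ℝ) < 1 + c)]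
      -- need 1 < (1 - c + y/2)(1 + c) = 1 - c² + (y/2)(1+c)
      have hcc : c = y / (α+1) := hc
      have expand : (1 - c + y / 2) * (1 + c) = 1 - c^2 + (y/2) * (1 + c) := by ring
      have hyceq : c * (α + 1) = y := by rw [hcc]; field_simp
      have hfin : c^2 < (y/2) * (1 + c) := by
        nlinarith [mul_pos hα hc0, hc0, hc1, hα, mul_pos (mul_pos hα hc0) hc0]
      nlinarith [expand, hfin]
    rw [show (-(1/α) : ℝ) = -q by rw [hqdef]]
    calc B ^ (-q) ≤ (1 + c)⁻¹ := hinv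
      _ < 1 - c + y / 2 := hkey
      _ = 1 - y / (α+1) + y / 2 := by rw [hc]

/-- Strict monotonicity of the Euler map `x ↦ x - (h/(α+1)) x^(α+1)` on `[0,1)`-ish. -/
lemma my_phimono (α h x v : ℝ) (hα : 0 < α) (hh0 : 0 < h) (hh1 : h ≤ 1)
    (hx0 : 0 ≤ x) (hxv : x < v) (hv1 : v < 1) :
    x - h / (α + 1) * x ^ (α + 1) < v - h / (α + 1) * v ^ (α + 1) := by
  have hα1 : (0:ℝ) < α + 1 := by linarith
  have hv0 : 0 < v := lt_of_le_of_lt hx0 hxv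
  -- tangent: v^{α+1} - x^{α+1} ≤ (α+1) v^α (v - x)
  have htan : v ^ (α+1) - x ^ (α+1) ≤ (α+1) * v ^ α * (v - x) := by
    rcases eq_or_lt_of_le hx0 with hx | hx
    · -- x = 0
      rw [← hx, Real.zero_rpow (by positivity : (α+1:ℝ) ≠ 0)]
      have hva : v ^ (α+1) = v ^ α * v := by
        rw [Real.rpow_add hv0, Real.rpow_one]
      rw [hva]
      have hvapos : 0 < v ^ α := Real.rpow_pos_of_pos hv0 _
      nlinarith [mul_pos (mul_pos hα hvapos) hv0]
    · -- x > 0 : use bernoulli on t = x/v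
      have ht : 0 < x / v := by positivity
      have hb := my_bernoulli (α+1) (x/v) (by linarith) ht
      -- (x/v)^(α+1) ≥ 1 + (α+1)(x/v - 1)
      have hsplit : (x/v) ^ (α+1) = x ^ (α+1) * (v ^ (α+1))⁻¹ := by
        rw [div_eq_mul_inv, Real.mul_rpow (le_of_lt hx) (inv_nonneg.mpr hv0.le),
          Real.inv_rpow hv0.le]
      have hvp : 0 < v ^ (α+1) := Real.rpow_pos_of_pos hv0 _
      have hva : v ^ (α+1) = v ^ α * v := by
        rw [Real.rpow_add hv0, Real.rpow_one]
      -- multiply hb by v^{α+1}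
      have h2 : (1 + (α+1) * (x/v - 1)) * v ^ (α+1) ≤ x ^ (α+1) := by
        calc (1 + (α+1) * (x/v - 1)) * v ^ (α+1) ≤ (x/v) ^ (α+1) * v ^ (α+1) :=
              mul_le_mul_of_nonneg_right hb hvp.le
          _ = x ^ (α+1) := by rw [hsplit]; field_simp
      have h3 : (1 + (α+1) * (x/v - 1)) * v ^ (α+1)
          = v ^ (α+1) - (α+1) * v ^ α * (v - x) := by
        rw [hva]; field_simp; ring
      linarith [h2, h3.symm.le]
  have hva1 : v ^ α < 1 := Real.rpow_lt_one hv0.le hv1 hα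
  have hva0 : 0 < v ^ α := Real.rpow_pos_of_pos hv0 _
  -- h/(α+1) * (v^{α+1} - x^{α+1}) ≤ h v^α (v-x) < v - x
  have hstep : h / (α+1) * (v ^ (α+1) - x ^ (α+1)) < v - x := by
    calc h / (α+1) * (v ^ (α+1) - x ^ (α+1)) ≤ h / (α+1) * ((α+1) * v ^ α * (v - x)) := by
          apply mul_le_mul_of_nonneg_left htan (by positivity)
      _ = h * v ^ α * (v - x) := by field_simp
      _ < v - x := by nlinarith [mul_pos hh0 hva0, mul_pos hva0 (by linarith : (0:ℝ) < v - x)]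
  linarith
theorem stmt6 (α : ℝ) (hα : 0 < α) (f : ℝ → ℝ)
    (hf : ∀ y, f y = (1 + α * y / (α + 1)) ^ (-(1 / α)))
    (fn : ℕ → ℝ → ℝ)
    (hfn1 : ∀ y, fn 1 y = 1 - y / (α + 1))
    (hfnrec : ∀ n : ℕ, 1 ≤ n → ∀ y : ℝ, 0 < y → y ≤ n →
      fn (n + 1) ((1 + 1 / n) * y) = fn n y - (y / ((α + 1) * n)) * (fn n y) ^ (α + 1)) :
    ∀ n : ℕ, 1 ≤ n → ∀ y : ℝ, 0 < y → y ≤ n → f y - fn n y < y / (2 * n) := by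
  have hα1 : (0:ℝ) < α + 1 := by linarith
  -- antitonicity of F
  have Fanti : ∀ s t : ℝ, 0 ≤ s → s ≤ t →
      (1 + α * t / (α + 1)) ^ (-(1 / α)) ≤ (1 + α * s / (α + 1)) ^ (-(1 / α)) := by
    intro s t hs hst
    apply Real.rpow_le_rpow_of_nonpos
    · have : 0 ≤ α * s / (α + 1) := by positivity
      linarith
    · have : α * s / (α + 1) ≤ α * t / (α + 1) := by
        gcongr
      linarith
    · simp only [neg_nonpos]
      positivity
  have key : ∀ n : ℕ, 1 ≤ n → ∀ y : ℝ, 0 < y → y ≤ n →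
      0 < fn n y ∧ fn n y ≤ 1 - (y / n) / (α + 1) ∧ f y - fn n y < (y / n) / 2 := by
    intro n hn
    induction n, hn using Nat.le_induction with
    | base =>
      intro y hy0 hy1
      have hy1' : y ≤ 1 := by exact_mod_cast hy1
      rw [hfn1 y, hf y]
      have hcast : ((1:ℕ):ℝ) = 1 := Nat.cast_one
      have hd1 : y / (α + 1) < 1 := by rw [div_lt_one hα1]; linarith
      refine ⟨by linarith, ?_, ?_⟩
      · rw [hcast, div_one]
      · rw [hcast, div_one]
        have := my_base α y hα hy0 hy1'
        linarith
    | succ n hn ih =>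
      intro z hz0 hzn
      have hn0 : (0:ℝ) < n := by exact_mod_cast hn
      have hn1 : (0:ℝ) < (n:ℝ) + 1 := by linarith
      have hzn' : z ≤ (n:ℝ) + 1 := by push_cast at hzn; exact hzn
      set y : ℝ := z * n / (n + 1) with hy
      have hy0 : 0 < y := div_pos (mul_pos hz0 hn0) hn1
      have hyn : y ≤ n := by
        rw [hy, div_le_iff₀ hn1]; nlinarith
      have hrec := hfnrec n hn y hy0 hyn
      have hzy : (1 + 1 / (n:ℝ)) * y = z := by
        rw [hy]; field_simp
      rw [hzy] at hrec
      obtain ⟨hpos, hub, herr⟩ := ih y hy0 hyn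
      set h : ℝ := z / ((n:ℝ) + 1) with hh
      have hh0 : 0 < h := div_pos hz0 hn1
      have hh1 : h ≤ 1 := by rw [hh, div_le_one hn1]; linarith
      have hhy : y / (n:ℝ) = h := by
        rw [hy, hh]; field_simp
      have hcoef : y / ((α + 1) * n) = h / (α + 1) := by
        rw [hy, hh]
        field_simp
      rw [hcoef] at hrec
      rw [hhy] at hub herr
      rw [hf y] at herr
      set v := fn n y with hv
      have hv1 : v < 1 := by
        have : 0 < h / (α + 1) := by positivity
        linarith
      have hvapow : v ^ (α + 1) = v ^ α * v := by
        rw [Real.rpow_add hpos, Real.rpow_one]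
      have hva : v ^ α ≤ 1 := Real.rpow_le_one hpos.le hv1.le hα.le
      have hva0 : 0 < v ^ α := Real.rpow_pos_of_pos hpos _
      have hsmall : h / (α + 1) * v ^ α < 1 := by
        have h1 : h * v ^ α ≤ 1 := by nlinarith [mul_nonneg hh0.le (sub_nonneg.mpr hva)]
        rw [div_mul_eq_mul_div, div_lt_one hα1]; linarith
      have hnewpos : 0 < fn (n+1) z := by
        rw [hrec, hvapow]
        nlinarith [mul_pos hpos (sub_pos.mpr hsmall)]
      have hnewub : fn (n+1) z ≤ 1 - h / (α + 1) := by
        rw [hrec]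
        have h1 : 0 ≤ h / (α + 1) * v ^ (α + 1) :=
          mul_nonneg (by positivity) (Real.rpow_nonneg hpos.le _)
        linarith
      refine ⟨hnewpos, ?_, ?_⟩
      · push_cast
        rw [← hh]
        exact hnewub
      · push_cast
        rw [← hh, hf z]
        rcases le_or_gt ((1 + α * y / (α + 1)) ^ (-(1 / α))) (h / 2) with hca | hcb
        · -- F y ≤ h/2 : use F z ≤ F y and positivity
          have hyz : y ≤ z := by rw [hy]; rw [div_le_iff₀ hn1]; nlinarith
          have := Fanti y z hy0.le hyz
          linarith
        · -- main case
          have hθ : 0 < (1 + α * y / (α + 1)) ^ (-(1 / α)) - h / 2 := by linarith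
          have hθv : (1 + α * y / (α + 1)) ^ (-(1 / α)) - h / 2 < v := by linarith
          have hsm := my_phimono α h ((1 + α * y / (α + 1)) ^ (-(1 / α)) - h / 2) v
            hα hh0 hh1 (by linarith) hθv hv1
          have hstar := my_star α h y hα hh0 hh1 hy0.le hθ
          have hzyh : y + h = z := by rw [hy, hh]; field_simp
          rw [hzyh] at hstar
          rw [hrec]
          linarith
  intro n hn y hy0 hyn
  obtain ⟨-, -, h3⟩ := key n hn y hy0 hyn
  have heq : y / (n:ℝ) / 2 = y / (2 * n) := by rw [div_div, mul_comm]
  linarith [heq ▸ h3]
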